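/- For any two m-dimensional linear subspaces F, G of ℝ^n, the operator norms satisfy ‖Π_F − Π_G‖ = ‖Π_{F⊥} − Π_{G⊥}‖ = ‖Π_{F⊥} ∘ Π_G‖ = ‖Π_F ∘ Π_{G⊥}‖ = ‖Π_{G⊥} ∘ Π_F‖ = ‖Π_G ∘ Π_{F⊥}‖, where Π_V denotes orthogonal projection onto the subspace V. -/

import Mathlib

open Metric Real Filter

noncomputable def pr {n : ℕ} (F : Submodule ℝ (EuclideanSpace ℝ (Fin n))) :
    EuclideanSpace ℝ (Fin n) →L[ℝ] EuclideanSpace ℝ (Fin n) :=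
  F.subtypeL.comp (Submodule.orthogonalProjection F)

noncomputable def graphSet {n : ℕ} (F : Submodule ℝ (EuclideanSpace ℝ (Fin n)))
    (u : F → Fᗮ) : Set (EuclideanSpace ℝ (Fin n)) :=
  Set.range fun z : F => (z : EuclideanSpace ℝ (Fin n)) + (u z : EuclideanSpace ℝ (Fin n))

noncomputable def cone {n : ℕ} (x : EuclideanSpace ℝ (Fin n)) (β : ℝ)
    (F : Submodule ℝ (EuclideanSpace ℝ (Fin n))) : Set (EuclideanSpace ℝ (Fin n)) :=
  {z | ‖pr Fᗮ (z - x)‖ ≤ β * ‖pr F (z - x)‖}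

section ProjAux

open scoped RealInnerProductSpace

variable {n : ℕ}

lemma pr_mem (F : Submodule ℝ (EuclideanSpace ℝ (Fin n))) (x : EuclideanSpace ℝ (Fin n)) :
    pr F x ∈ F := (Submodule.orthogonalProjection F x).2

lemma pr_eq_self {F : Submodule ℝ (EuclideanSpace ℝ (Fin n))} {x : EuclideanSpace ℝ (Fin n)}
    (hx : x ∈ F) : pr F x = x := by
  exact (Submodule.starProjection_eq_self_iff (K := F)).mpr hx

lemma pr_orth (F : Submodule ℝ (EuclideanSpace ℝ (Fin n))) :
    pr Fᗮ = ContinuousLinearMap.id ℝ _ - pr F := by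
  ext x
  simp [pr]

lemma inner_pr_symm (F : Submodule ℝ (EuclideanSpace ℝ (Fin n))) (x y : EuclideanSpace ℝ (Fin n)) :
    ⟪pr F x, y⟫ = ⟪x, pr F y⟫ :=
  Submodule.inner_starProjection_left_eq_right F x y

lemma pr_pythagoras (F : Submodule ℝ (EuclideanSpace ℝ (Fin n))) (x : EuclideanSpace ℝ (Fin n)) :
    ‖x - pr F x‖ ^ 2 = ‖x‖ ^ 2 - ‖pr F x‖ ^ 2 := by
  have h : ⟪pr F x, x - pr F x⟫ = 0 := by
    apply Submodule.inner_right_of_mem_orthogonal (pr_mem F x)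
    exact Submodule.sub_starProjection_mem_orthogonal x
  have := norm_add_sq_real (pr F x) (x - pr F x)
  rw [h] at this
  simp only [add_sub_cancel] at this
  linarith

lemma norm_pr_le (F : Submodule ℝ (EuclideanSpace ℝ (Fin n))) (x : EuclideanSpace ℝ (Fin n)) :
    ‖pr F x‖ ≤ ‖x‖ := by
  have h := pr_pythagoras F x
  have h2 : (0:ℝ) ≤ ‖x - pr F x‖ ^ 2 := sq_nonneg _
  nlinarith [norm_nonneg (pr F x), norm_nonneg x]

lemma exists_norm_attained {V W : Type*} [NormedAddCommGroup V] [NormedSpace ℝ V]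
    [NormedAddCommGroup W] [NormedSpace ℝ W] [FiniteDimensional ℝ V] [Nontrivial V]
    (T : V →L[ℝ] W) : ∃ v : V, ‖v‖ = 1 ∧ ‖T v‖ = ‖T‖ := by
  obtain ⟨v₀, hv₀⟩ := exists_ne (0 : V)
  have hsn : (sphere (0:V) 1).Nonempty := by
    refine ⟨‖v₀‖⁻¹ • v₀, ?_⟩
    simp [norm_smul, norm_ne_zero_iff.mpr hv₀, inv_mul_cancel₀]
  obtain ⟨v, hv, hmax'⟩ := (isCompact_sphere (0:V) 1).exists_isMaxOn hsn
    ((continuous_norm.comp T.continuous).continuousOn)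
  have hmax : ∀ y ∈ sphere (0:V) 1, ‖T y‖ ≤ ‖T v‖ := fun y hy => hmax' hy
  have hv1 : ‖v‖ = 1 := by simpa using mem_sphere_zero_iff_norm.mp hv
  refine ⟨v, hv1, le_antisymm (by simpa [hv1] using T.le_opNorm v) ?_⟩
  refine T.opNorm_le_bound (norm_nonneg _) fun x => ?_
  rcases eq_or_ne x 0 with rfl | hx
  · simp
  · have hxs : (‖x‖⁻¹ • x) ∈ sphere (0:V) 1 := by
      simp [norm_smul, norm_ne_zero_iff.mpr hx, inv_mul_cancel₀]
    have := hmax _ hxs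
    rw [map_smul, norm_smul] at this
    simp only [norm_inv, norm_norm] at this
    have hxpos : (0:ℝ) < ‖x‖ := norm_pos_iff.mpr hx
    calc ‖T x‖ = ‖x‖ * (‖x‖⁻¹ * ‖T x‖) := by field_simp
    _ ≤ ‖x‖ * ‖T v‖ := by nlinarith
    _ = ‖T v‖ * ‖x‖ := mul_comm _ _

lemma norm_coe (F : Submodule ℝ (EuclideanSpace ℝ (Fin n))) (f : F) :
    ‖(f : EuclideanSpace ℝ (Fin n))‖ = ‖f‖ := rfl

lemma norm_comp_le_one (F G : Submodule ℝ (EuclideanSpace ℝ (Fin n))) :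
    ‖(pr Gᗮ).comp (pr F)‖ ≤ 1 := by
  refine ContinuousLinearMap.opNorm_le_bound _ zero_le_one fun x => ?_
  simp only [ContinuousLinearMap.coe_comp', Function.comp_apply, one_mul]
  exact (norm_pr_le _ _).trans (norm_pr_le _ _)

lemma norm_comp_of_ker (F G : Submodule ℝ (EuclideanSpace ℝ (Fin n))) (f : F) (hf : f ≠ 0)
    (h : pr G (f : EuclideanSpace ℝ (Fin n)) = 0) : ‖(pr Gᗮ).comp (pr F)‖ = 1 := by
  refine le_antisymm (norm_comp_le_one F G) ?_
  have hfe : ((pr Gᗮ).comp (pr F)) (f : EuclideanSpace ℝ (Fin n)) = f := by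
    rw [ContinuousLinearMap.comp_apply, pr_eq_self f.2, pr_orth]
    simp [h]
  have hfpos : (0:ℝ) < ‖(f : EuclideanSpace ℝ (Fin n))‖ := by
    rw [norm_coe]; exact norm_pos_iff.mpr hf
  have := ContinuousLinearMap.le_opNorm ((pr Gᗮ).comp (pr F)) (f : EuclideanSpace ℝ (Fin n))
  rw [hfe] at this
  calc (1:ℝ) = ‖(f : EuclideanSpace ℝ (Fin n))‖ / ‖(f : EuclideanSpace ℝ (Fin n))‖ := by
        rw [div_self hfpos.ne']
  _ ≤ ‖(pr Gᗮ).comp (pr F)‖ := by rw [div_le_iff₀ hfpos] at *; linarith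

lemma aux_le_sq {a p q X r s : ℝ} (hp0 : 0 ≤ p) (hpX : p ≤ X) (hr0 : 0 < r)
    (ha2 : a ^ 2 = p ^ 2 - q ^ 2) (h2 : r⁻¹ * p ≤ q) (hs2 : s ^ 2 = 1 - r⁻¹ ^ 2) :
    a ^ 2 ≤ (s * X) ^ 2 := by
  have h0 : 0 < r⁻¹ := inv_pos.mpr hr0
  have hXp : 0 ≤ X := hp0.trans hpX
  have hq2 : (r⁻¹ * p) ^ 2 ≤ q ^ 2 := by
    have h3 : 0 ≤ r⁻¹ * p := by positivity
    nlinarith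
  have hs2n : 0 ≤ 1 - r⁻¹ ^ 2 := by nlinarith [sq_nonneg s]
  have hP2 : p ^ 2 ≤ X ^ 2 := by nlinarith
  rw [ha2, mul_pow, hs2]
  nlinarith [sq_nonneg (r⁻¹ * p)]

lemma aux_sqrt_le {a b : ℝ} (ha : 0 ≤ a) (hb : 0 ≤ b) (h : a ^ 2 ≤ b ^ 2) : a ≤ b := by
  calc a = Real.sqrt (a ^ 2) := (Real.sqrt_sq ha).symm
  _ ≤ Real.sqrt (b ^ 2) := Real.sqrt_le_sqrt h
  _ = b := Real.sqrt_sq hb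

lemma aux_sq_le_sq {a b : ℝ} (ha : 0 ≤ a) (hb : 0 ≤ b) (h : a ≤ b) : a ^ 2 ≤ b ^ 2 := by nlinarith

lemma aux_cancel {r s N : ℝ} (hr0 : 0 < r) (h : s ^ 2 * r ^ 2 ≤ N ^ 2 * r ^ 2) :
    s ^ 2 ≤ N ^ 2 := by
  have : 0 < r ^ 2 := by positivity
  exact le_of_mul_le_mul_right h this

lemma norm_comp_of_equiv (F G : Submodule ℝ (EuclideanSpace ℝ (Fin n)))
    (e : F ≃L[ℝ] G) (he : ∀ f : F, ((e f : G) : EuclideanSpace ℝ (Fin n)) = pr G f)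
    [Nontrivial G] :
    ‖(pr Gᗮ).comp (pr F)‖ = Real.sqrt (1 - (‖(e.symm : G →L[ℝ] F)‖)⁻¹ ^ 2) := by
  set r : ℝ := ‖(e.symm : G →L[ℝ] F)‖ with hr
  obtain ⟨g₀, hg₀1, hg₀r⟩ := exists_norm_attained (e.symm : G →L[ℝ] F)
  set f₀ : F := e.symm g₀ with hf₀
  have hef₀ : e f₀ = g₀ := e.apply_symm_apply g₀
  have hnf₀ : ‖f₀‖ = r := hg₀r
  -- norm of projection in terms of e
  have hpre : ∀ f : F, ‖pr G (f : EuclideanSpace ℝ (Fin n))‖ = ‖e f‖ := by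
    intro f; rw [← he f]; rfl
  have hr1 : 1 ≤ r := by
    have h1 : ‖pr G (f₀ : EuclideanSpace ℝ (Fin n))‖ ≤ ‖f₀‖ :=
      (norm_pr_le G _).trans_eq (norm_coe F f₀)
    rw [hpre f₀, hef₀, hg₀1] at h1
    exact h1.trans_eq hnf₀
  have hr0 : 0 < r := lt_of_lt_of_le zero_lt_one hr1
  -- lower bound on projection norms
  have hlow : ∀ f : F, ‖f‖ ≤ r * ‖pr G (f : EuclideanSpace ℝ (Fin n))‖ := by
    intro f
    rw [hpre f]
    calc ‖f‖ = ‖(e.symm : G →L[ℝ] F) (e f)‖ := by rw [ContinuousLinearEquiv.coe_coe,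
          e.symm_apply_apply]
    _ ≤ r * ‖e f‖ := ContinuousLinearMap.le_opNorm _ _
  set s : ℝ := Real.sqrt (1 - r⁻¹ ^ 2) with hs
  have hs0 : 0 ≤ s := Real.sqrt_nonneg _
  have harg : 0 ≤ 1 - r⁻¹ ^ 2 := by
    have : r⁻¹ ≤ 1 := by rw [inv_le_one_iff₀]; right; exact hr1
    have h0 : 0 < r⁻¹ := inv_pos.mpr hr0
    nlinarith
  have hs2 : s ^ 2 = 1 - r⁻¹ ^ 2 := Real.sq_sqrt harg
  refine le_antisymm ?_ ?_
  · refine ContinuousLinearMap.opNorm_le_bound _ hs0 fun x => ?_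
    have hc : ((pr Gᗮ).comp (pr F)) x = pr F x - pr G (pr F x) := by
      rw [ContinuousLinearMap.comp_apply, pr_orth]; rfl
    have hpy := pr_pythagoras G (pr F x)
    have hfx : pr F x = ((Submodule.orthogonalProjection F x : F) : EuclideanSpace ℝ (Fin n)) := rfl
    have hl := hlow (Submodule.orthogonalProjection F x)
    rw [← hfx] at hl
    have hl' : ‖pr F x‖ ≤ r * ‖pr G (pr F x)‖ := hl
    have hPx : ‖pr F x‖ ≤ ‖x‖ := norm_pr_le F x
    have ha2 : ‖((pr Gᗮ).comp (pr F)) x‖ ^ 2 = ‖pr F x‖ ^ 2 - ‖pr G (pr F x)‖ ^ 2 := by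
      rw [hc]; exact hpy
    have h2 : r⁻¹ * ‖pr F x‖ ≤ ‖pr G (pr F x)‖ := by
      rw [inv_mul_le_iff₀ hr0]; linarith [hl']
    exact aux_sqrt_le (norm_nonneg _) (mul_nonneg hs0 (norm_nonneg _))
      (aux_le_sq (norm_nonneg _) hPx hr0 ha2 h2 hs2)
  · -- lower bound using f₀
    have hcf : ((pr Gᗮ).comp (pr F)) (f₀ : EuclideanSpace ℝ (Fin n))
        = (f₀ : EuclideanSpace ℝ (Fin n)) - pr G (f₀ : EuclideanSpace ℝ (Fin n)) := by
      rw [ContinuousLinearMap.comp_apply, pr_eq_self f₀.2, pr_orth]; rfl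
    have hnorm2 : ‖((pr Gᗮ).comp (pr F)) (f₀ : EuclideanSpace ℝ (Fin n))‖ ^ 2 = r ^ 2 - 1 := by
      rw [hcf, pr_pythagoras G, hpre f₀, hef₀, hg₀1, norm_coe, hnf₀]
      ring
    have hle := ContinuousLinearMap.le_opNorm ((pr Gᗮ).comp (pr F))
      (f₀ : EuclideanSpace ℝ (Fin n))
    rw [norm_coe, hnf₀] at hle
    -- ‖comp f₀‖ ≤ ‖comp‖ * r, and ‖comp f₀‖² = r² − 1, s² r² = r² − 1
    have hN0 : 0 ≤ ‖(pr Gᗮ).comp (pr F)‖ := norm_nonneg _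
    have hv0 : 0 ≤ ‖((pr Gᗮ).comp (pr F)) (f₀ : EuclideanSpace ℝ (Fin n))‖ := norm_nonneg _
    have hs2r : s ^ 2 * r ^ 2 = r ^ 2 - 1 := by
      rw [hs2]; field_simp
    have h1 : ‖((pr Gᗮ).comp (pr F)) (f₀ : EuclideanSpace ℝ (Fin n))‖ ^ 2
        ≤ (‖(pr Gᗮ).comp (pr F)‖ * r) ^ 2 :=
      aux_sq_le_sq hv0 (mul_nonneg hN0 hr0.le) hle
    have h2 : s ^ 2 ≤ ‖(pr Gᗮ).comp (pr F)‖ ^ 2 := aux_cancel hr0 (by linarith [hnorm2, h1])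
    exact aux_sqrt_le hs0 hN0 h2

set_option maxHeartbeats 1000000 in
lemma key (F G : Submodule ℝ (EuclideanSpace ℝ (Fin n)))
    (hFG : Module.finrank ℝ F = Module.finrank ℝ G) (hF : F ≠ ⊥) (hG : G ≠ ⊥) :
    ‖(pr Gᗮ).comp (pr F)‖ = ‖(pr Fᗮ).comp (pr G)‖ := by
  haveI : Nontrivial F := Submodule.nontrivial_iff_ne_bot.mpr hF
  haveI : Nontrivial G := Submodule.nontrivial_iff_ne_bot.mpr hG
  set A : F →L[ℝ] G := (Submodule.orthogonalProjection G).comp F.subtypeL with hA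
  set A' : G →L[ℝ] F := (Submodule.orthogonalProjection F).comp G.subtypeL with hA'
  have hadj : A' = ContinuousLinearMap.adjoint A := by
    rw [ContinuousLinearMap.eq_adjoint_iff]
    intro g f
    have h1 : ⟪A' g, f⟫ = ⟪pr F (g : EuclideanSpace ℝ (Fin n)), (f : EuclideanSpace ℝ (Fin n))⟫ := rfl
    have h2 : ⟪g, A f⟫ = ⟪(g : EuclideanSpace ℝ (Fin n)), pr G (f : EuclideanSpace ℝ (Fin n))⟫ := rfl
    rw [h1, h2, inner_pr_symm, pr_eq_self f.2, ← inner_pr_symm, pr_eq_self g.2]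
  by_cases hinj : Function.Injective A
  · -- bijective case
    have hsurj : Function.Surjective A := by
      have := (LinearMap.injective_iff_surjective_of_finrank_eq_finrank hFG).mp
        (show Function.Injective (A : F →ₗ[ℝ] G) from hinj)
      exact this
    have hbij : Function.Bijective (A : F →ₗ[ℝ] G) := ⟨hinj, hsurj⟩
    let e : F ≃L[ℝ] G := (LinearEquiv.ofBijective (A : F →ₗ[ℝ] G) hbij).toContinuousLinearEquiv
    have heA : ∀ f : F, e f = A f := fun f => rfl
    have he : ∀ f : F, ((e f : G) : EuclideanSpace ℝ (Fin n)) = pr G f := fun f => rfl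
    -- adjoint side
    have hinj' : Function.Injective A' := by
      intro g₁ g₂ h12
      have h0 : A' (g₁ - g₂) = 0 := by rw [map_sub, h12, sub_self]
      have hz : g₁ - g₂ = 0 := by
        by_contra hne
        have hip : ∀ f : F, ⟪g₁ - g₂, A f⟫ = 0 := by
          intro f
          rw [← ContinuousLinearMap.adjoint_inner_left, ← hadj, h0, inner_zero_left]
        obtain ⟨f, hfeq⟩ := hsurj (g₁ - g₂)
        have := hip f
        rw [hfeq, inner_self_eq_zero] at this
        exact hne this
      exact sub_eq_zero.mp hz
    have hsurj' : Function.Surjective A' :=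
      (LinearMap.injective_iff_surjective_of_finrank_eq_finrank hFG.symm).mp hinj'
    have hbij' : Function.Bijective (A' : G →ₗ[ℝ] F) := ⟨hinj', hsurj'⟩
    let e' : G ≃L[ℝ] F := (LinearEquiv.ofBijective (A' : G →ₗ[ℝ] F) hbij').toContinuousLinearEquiv
    have he' : ∀ g : G, ((e' g : F) : EuclideanSpace ℝ (Fin n)) = pr F g := fun g => rfl
    rw [norm_comp_of_equiv F G e he, norm_comp_of_equiv G F e' he']
    have hcoe : (e : F →L[ℝ] G) = A := by ext f; rfl
    have hcoe' : (e' : G →L[ℝ] F) = A' := by ext g; rfl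
    set S : G →L[ℝ] F := (e.symm : G →L[ℝ] F) with hS
    have hSA : S.comp A = ContinuousLinearMap.id ℝ F := by
      ext f
      have h1 : S (A f) = e.symm (e f) := by rw [← hcoe]; rfl
      simp only [ContinuousLinearMap.coe_comp', Function.comp_apply,
        ContinuousLinearMap.coe_id', id_eq]
      rw [h1, e.symm_apply_apply]
    have hAdS : (ContinuousLinearMap.adjoint A).comp (ContinuousLinearMap.adjoint S)
        = ContinuousLinearMap.id ℝ F := by
      rw [← ContinuousLinearMap.adjoint_comp, hSA, ContinuousLinearMap.adjoint_id]
    have heq : (e'.symm : F →L[ℝ] G) = ContinuousLinearMap.adjoint S := by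
      refine ContinuousLinearMap.ext fun f => ?_
      apply e'.injective
      have h2 : e' ((ContinuousLinearMap.adjoint S) f) = f := by
        have h3 : (e' : G →L[ℝ] F) ((ContinuousLinearMap.adjoint S) f)
            = ((ContinuousLinearMap.adjoint A).comp (ContinuousLinearMap.adjoint S)) f := by
          rw [hcoe', hadj]; rfl
        have h4 : (e' : G →L[ℝ] F) ((ContinuousLinearMap.adjoint S) f) = f := by
          rw [h3, hAdS]; rfl
        exact h4
      rw [h2]
      exact e'.apply_symm_apply f
    have hnorm : ‖(e'.symm : F →L[ℝ] G)‖ = ‖S‖ := by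
      rw [heq]
      exact LinearIsometryEquiv.norm_map ContinuousLinearMap.adjoint S
    rw [hnorm]
  · -- non-injective case
    have hker : LinearMap.ker (A : F →ₗ[ℝ] G) ≠ ⊥ := fun h => hinj (LinearMap.ker_eq_bot.mp h)
    obtain ⟨f, hfmem, hfne⟩ := Submodule.ne_bot_iff _ |>.mp hker
    have hf0 : A f = 0 := hfmem
    have hprG : pr G (f : EuclideanSpace ℝ (Fin n)) = 0 := by
      have : pr G (f : EuclideanSpace ℝ (Fin n)) = ((A f : G) : EuclideanSpace ℝ (Fin n)) := rfl
      rw [this, hf0, Submodule.coe_zero]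
    rw [norm_comp_of_ker F G f hfne hprG]
    -- A not surjective, find g ⊥ range A
    have hnsurj : ¬ Function.Surjective A := fun hs =>
      hinj ((LinearMap.injective_iff_surjective_of_finrank_eq_finrank hFG).mpr hs)
    have hrange : LinearMap.range (A : F →ₗ[ℝ] G) ≠ ⊤ := fun h =>
      hnsurj (LinearMap.range_eq_top.mp h)
    have horth : (LinearMap.range (A : F →ₗ[ℝ] G))ᗮ ≠ ⊥ := fun h =>
      hrange (Submodule.orthogonal_eq_bot_iff.mp h)
    obtain ⟨g, hgmem, hgne⟩ := Submodule.ne_bot_iff _ |>.mp horth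
    have hA'g : A' g = 0 := by
      have hip : ⟪A' g, A' g⟫ = (0:ℝ) := by
        conv_lhs => rw [hadj, ContinuousLinearMap.adjoint_inner_left]
        have h0 : ⟪A (A' g), g⟫ = (0:ℝ) :=
          Submodule.inner_right_of_mem_orthogonal (LinearMap.mem_range_self (A : F →ₗ[ℝ] G) _) hgmem
        rw [real_inner_comm] at h0
        rw [← hadj]
        exact h0
      exact inner_self_eq_zero.mp hip
    have hprF : pr F (g : EuclideanSpace ℝ (Fin n)) = 0 := by
      have : pr F (g : EuclideanSpace ℝ (Fin n)) = ((A' g : F) : EuclideanSpace ℝ (Fin n)) := rfl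
      rw [this, hA'g, Submodule.coe_zero]
    rw [norm_comp_of_ker G F g hgne hprF]

lemma pr_adjoint (K : Submodule ℝ (EuclideanSpace ℝ (Fin n))) :
    ContinuousLinearMap.adjoint (pr K) = pr K :=
  (isSelfAdjoint_starProjection K).adjoint_eq

lemma norm_comp_comm (K L : Submodule ℝ (EuclideanSpace ℝ (Fin n))) :
    ‖(pr K).comp (pr L)‖ = ‖(pr L).comp (pr K)‖ := by
  calc ‖(pr K).comp (pr L)‖
      = ‖ContinuousLinearMap.adjoint ((pr K).comp (pr L))‖ :=
        (LinearIsometryEquiv.norm_map ContinuousLinearMap.adjoint _).symm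
  _ = ‖(pr L).comp (pr K)‖ := by
        rw [ContinuousLinearMap.adjoint_comp, pr_adjoint, pr_adjoint]

lemma diff_sq (F G : Submodule ℝ (EuclideanSpace ℝ (Fin n))) (x : EuclideanSpace ℝ (Fin n)) :
    ‖(pr F - pr G) x‖ ^ 2
      = ‖((pr F).comp (pr Gᗮ)) x‖ ^ 2 + ‖((pr Fᗮ).comp (pr G)) x‖ ^ 2 := by
  have hv : ((pr F).comp (pr Gᗮ)) x = pr F x - pr F (pr G x) := by
    rw [ContinuousLinearMap.comp_apply, pr_orth]
    simp [map_sub]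
  have hu : ((pr Fᗮ).comp (pr G)) x = pr G x - pr F (pr G x) := by
    rw [ContinuousLinearMap.comp_apply, pr_orth]; rfl
  have h1 : (pr F - pr G) x = ((pr F).comp (pr Gᗮ)) x - ((pr Fᗮ).comp (pr G)) x := by
    rw [hv, hu]
    simp only [ContinuousLinearMap.sub_apply]
    abel
  have h2 : ⟪((pr F).comp (pr Gᗮ)) x, ((pr Fᗮ).comp (pr G)) x⟫ = 0 :=
    Submodule.inner_right_of_mem_orthogonal (pr_mem F _) (pr_mem Fᗮ _)
  rw [h1]
  have := norm_sub_sq_real (((pr F).comp (pr Gᗮ)) x) (((pr Fᗮ).comp (pr G)) x)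
  rw [h2] at this
  linarith

lemma comp_le_diff (F G : Submodule ℝ (EuclideanSpace ℝ (Fin n))) :
    ‖(pr Fᗮ).comp (pr G)‖ ≤ ‖pr F - pr G‖ := by
  refine ContinuousLinearMap.opNorm_le_bound _ (norm_nonneg _) fun x => ?_
  have h := diff_sq F G x
  have h2 : ‖((pr Fᗮ).comp (pr G)) x‖ ^ 2 ≤ ‖(pr F - pr G) x‖ ^ 2 := by
    nlinarith [sq_nonneg ‖((pr F).comp (pr Gᗮ)) x‖]
  have h3 : ‖((pr Fᗮ).comp (pr G)) x‖ ≤ ‖(pr F - pr G) x‖ :=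
    aux_sqrt_le (norm_nonneg _) (norm_nonneg _) h2
  exact h3.trans (ContinuousLinearMap.le_opNorm _ x)

lemma pr_idem (K : Submodule ℝ (EuclideanSpace ℝ (Fin n))) (x : EuclideanSpace ℝ (Fin n)) :
    pr K (pr K x) = pr K x := pr_eq_self (pr_mem K x)

lemma pyth_split (G : Submodule ℝ (EuclideanSpace ℝ (Fin n))) (x : EuclideanSpace ℝ (Fin n)) :
    ‖pr G x‖ ^ 2 + ‖pr Gᗮ x‖ ^ 2 = ‖x‖ ^ 2 := by
  have h : pr Gᗮ x = x - pr G x := by rw [pr_orth]; rfl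
  rw [h, pr_pythagoras]
  ring

lemma diff_le_comp (F G : Submodule ℝ (EuclideanSpace ℝ (Fin n)))
    (hc : ‖(pr F).comp (pr Gᗮ)‖ = ‖(pr Fᗮ).comp (pr G)‖) :
    ‖pr F - pr G‖ ≤ ‖(pr Fᗮ).comp (pr G)‖ := by
  set c : ℝ := ‖(pr Fᗮ).comp (pr G)‖ with hcc
  refine ContinuousLinearMap.opNorm_le_bound _ (norm_nonneg _) fun x => ?_
  have h := diff_sq F G x
  have hb1 : ‖((pr F).comp (pr Gᗮ)) x‖ ≤ c * ‖pr Gᗮ x‖ := by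
    have : ((pr F).comp (pr Gᗮ)) x = ((pr F).comp (pr Gᗮ)) (pr Gᗮ x) := by
      simp only [ContinuousLinearMap.comp_apply, pr_idem]
    rw [this, ← hc]
    exact ContinuousLinearMap.le_opNorm _ _
  have hb2 : ‖((pr Fᗮ).comp (pr G)) x‖ ≤ c * ‖pr G x‖ := by
    have : ((pr Fᗮ).comp (pr G)) x = ((pr Fᗮ).comp (pr G)) (pr G x) := by
      simp only [ContinuousLinearMap.comp_apply, pr_idem]
    rw [this]
    exact ContinuousLinearMap.le_opNorm _ _
  have hpy := pyth_split G x
  have hc0 : 0 ≤ c := norm_nonneg _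
  have hb1s : ‖((pr F).comp (pr Gᗮ)) x‖ ^ 2 ≤ (c * ‖pr Gᗮ x‖) ^ 2 :=
    aux_sq_le_sq (norm_nonneg _) (mul_nonneg hc0 (norm_nonneg _)) hb1
  have hb2s : ‖((pr Fᗮ).comp (pr G)) x‖ ^ 2 ≤ (c * ‖pr G x‖) ^ 2 :=
    aux_sq_le_sq (norm_nonneg _) (mul_nonneg hc0 (norm_nonneg _)) hb2
  have hsq : ‖(pr F - pr G) x‖ ^ 2 ≤ (c * ‖x‖) ^ 2 := by
    have e1 : (c * ‖pr Gᗮ x‖) ^ 2 = c ^ 2 * ‖pr Gᗮ x‖ ^ 2 := by ring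
    have e2 : (c * ‖pr G x‖) ^ 2 = c ^ 2 * ‖pr G x‖ ^ 2 := by ring
    have e3 : (c * ‖x‖) ^ 2 = c ^ 2 * ‖x‖ ^ 2 := by ring
    nlinarith [sq_nonneg c]
  exact aux_sqrt_le (norm_nonneg _) (mul_nonneg hc0 (norm_nonneg _)) hsq

end ProjAux

section Main

/-- Lemma A.1 (Allard 8.9(3)): equalities of operator norms of projection
differences and compositions for two `m`-dimensional subspaces of `ℝⁿ`. -/
theorem projection_norm_identities {n m : ℕ} (hm : 1 ≤ m) (hmn : m ≤ n)
    (F G : Submodule ℝ (EuclideanSpace ℝ (Fin n)))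
    (hF : Module.finrank ℝ F = m) (hG : Module.finrank ℝ G = m) :
    ‖pr F - pr G‖ = ‖pr Fᗮ - pr Gᗮ‖ ∧
    ‖pr F - pr G‖ = ‖(pr Fᗮ).comp (pr G)‖ ∧
    ‖pr F - pr G‖ = ‖(pr F).comp (pr Gᗮ)‖ ∧
    ‖pr F - pr G‖ = ‖(pr Gᗮ).comp (pr F)‖ ∧
    ‖pr F - pr G‖ = ‖(pr G).comp (pr Fᗮ)‖ := by
  have hFbot : F ≠ ⊥ := by
    intro h; rw [h, finrank_bot] at hF; omega
  have hGbot : G ≠ ⊥ := by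
    intro h; rw [h, finrank_bot] at hG; omega
  have hFG : Module.finrank ℝ F = Module.finrank ℝ G := hF.trans hG.symm
  -- the key symmetric equality (applied with roles G, F)
  have hkey : ‖(pr Fᗮ).comp (pr G)‖ = ‖(pr Gᗮ).comp (pr F)‖ :=
    (key G F hFG.symm hGbot hFbot)
  have h14 : ‖(pr Fᗮ).comp (pr G)‖ = ‖(pr G).comp (pr Fᗮ)‖ := norm_comp_comm Fᗮ G
  have h23 : ‖(pr F).comp (pr Gᗮ)‖ = ‖(pr Gᗮ).comp (pr F)‖ := norm_comp_comm F Gᗮ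
  have hc : ‖(pr F).comp (pr Gᗮ)‖ = ‖(pr Fᗮ).comp (pr G)‖ := by rw [h23, ← hkey]
  have hD : ‖pr F - pr G‖ = ‖(pr Fᗮ).comp (pr G)‖ :=
    le_antisymm (diff_le_comp F G hc) (comp_le_diff F G)
  have h1 : ‖pr F - pr G‖ = ‖pr Fᗮ - pr Gᗮ‖ := by
    have he : pr Fᗮ - pr Gᗮ = -(pr F - pr G) := by
      rw [pr_orth F, pr_orth G]; abel
    rw [he, norm_neg]
  exact ⟨h1, hD, by rw [hD, ← hc], by rw [hD, hkey], by rw [hD, h14]⟩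

end Main
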